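/- arXiv:2407.01290 — 4 statements merged into one kernel-verified Lean document; each statement's English description precedes it below -/
import Mathlib

section
/- Let d, d' be positive integers, let κ_1 < 0 and κ_2 < 0, let x ∈ 𝕃^{d, κ_1}, and let f_r : ℝ^d → ℝ^{d'} be an arbitrary function applied to the space-like part x_s of x; set w = f_r(x_s). Then the point HRC(x) := (√((κ_1/κ_2)·‖w‖² − 1/κ_2), √(κ_1/κ_2)·w) ∈ ℝ^{d'+1} lies in 𝕃^{d', κ_2}; that is, ⟨HRC(x), HRC(x)⟩_L = 1/κ_2 and its time-like component is strictly positive. -/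
/-- Real inverse hyperbolic cosine. -/
noncomputable def arcosh (x : ℝ) : ℝ := Real.log (x + Real.sqrt (x ^ 2 - 1))

/-- Lorentzian inner product on ℝ^{n+1}: ⟨x, y⟩_L = −x₀y₀ + Σ_{i=1}^n xᵢyᵢ. -/
noncomputable def lorentzInner {n : ℕ} (x y : Fin (n + 1) → ℝ) : ℝ :=
  -(x 0 * y 0) + ∑ i : Fin n, x i.succ * y i.succ

/-- The Lorentz model 𝕃^{n,κ}: ⟨x, x⟩_L = 1/κ and positive time-like component. -/
def inLorentz {n : ℕ} (κ : ℝ) (x : Fin (n + 1) → ℝ) : Prop :=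
  lorentzInner x x = 1 / κ ∧ 0 < x 0

/-- Lorentz distance d^κ(x,y) = (1/√|κ|)·arcosh(κ·⟨x,y⟩_L). -/
noncomputable def lorentzDist {n : ℕ} (κ : ℝ) (x y : Fin (n + 1) → ℝ) : ℝ :=
  (1 / Real.sqrt |κ|) * arcosh (κ * lorentzInner x y)

/-- The HRC transform applied to the space-like part lies in 𝕃^{d',κ₂}. -/
theorem hrc_mem_lorentz (d d' : ℕ) (hd : 0 < d) (hd' : 0 < d')
    (κ1 κ2 : ℝ) (hκ1 : κ1 < 0) (hκ2 : κ2 < 0)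
    (x : Fin (d + 1) → ℝ) (hx : inLorentz κ1 x)
    (fr : (Fin d → ℝ) → (Fin d' → ℝ))
    (w : Fin d' → ℝ) (hw : w = fr (fun i => x i.succ)) :
    inLorentz κ2
      (Fin.cons (Real.sqrt (κ1 / κ2 * ∑ i : Fin d', w i ^ 2 - 1 / κ2))
        (fun i => Real.sqrt (κ1 / κ2) * w i)) := by
  have hr : 0 < κ1 / κ2 := div_pos_of_neg_of_neg hκ1 hκ2
  have hs : 0 ≤ ∑ i : Fin d', w i ^ 2 := Finset.sum_nonneg fun i _ => sq_nonneg _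
  have hneg : 1 / κ2 < 0 := one_div_neg.mpr hκ2
  have harg : 0 < κ1 / κ2 * ∑ i : Fin d', w i ^ 2 - 1 / κ2 := by nlinarith
  constructor
  · unfold lorentzInner
    simp only [Fin.cons_zero, Fin.cons_succ, mul_pow]
    rw [Real.mul_self_sqrt harg.le]
    have : ∀ i : Fin d', Real.sqrt (κ1/κ2) * w i * (Real.sqrt (κ1/κ2) * w i)
        = (κ1/κ2) * w i ^ 2 := fun i => by
      rw [mul_mul_mul_comm, Real.mul_self_sqrt hr.le]; ring
    simp only [this, ← Finset.mul_sum]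
    ring
  · rw [Fin.cons_zero]
    exact Real.sqrt_pos.mpr harg
end

section
/- Let x, y ∈ ℝ^{n+1} be future-directed time-like vectors, i.e. ⟨x, x⟩_L < 0, ⟨y, y⟩_L < 0, x_0 > 0, and y_0 > 0. Then ⟨x, y⟩_L ≤ −√(⟨x, x⟩_L · ⟨y, y⟩_L) < 0 (reverse Cauchy–Schwarz inequality for future-directed time-like vectors). -/
/-- Reverse Cauchy–Schwarz for future-directed time-like vectors. -/
theorem reverse_cauchy_schwarz_timelike (n : ℕ) (x y : Fin (n + 1) → ℝ)
    (hx : lorentzInner x x < 0) (hy : lorentzInner y y < 0)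
    (hx0 : 0 < x 0) (hy0 : 0 < y 0) :
    lorentzInner x y ≤ -Real.sqrt (lorentzInner x x * lorentzInner y y) ∧
      lorentzInner x y < 0 := by
  set a := x 0 with ha
  set b := y 0 with hb
  set P := ∑ i : Fin n, x i.succ * x i.succ with hPdef
  set Q := ∑ i : Fin n, y i.succ * y i.succ with hQdef
  set S := ∑ i : Fin n, x i.succ * y i.succ with hSdef
  have hxx : lorentzInner x x = -(a*a) + P := rfl
  have hyy : lorentzInner y y = -(b*b) + Q := rfl
  have hxy : lorentzInner x y = -(a*b) + S := rfl
  have hP0 : 0 ≤ P := Finset.sum_nonneg fun i _ => mul_self_nonneg _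
  have hQ0 : 0 ≤ Q := Finset.sum_nonneg fun i _ => mul_self_nonneg _
  have hPa : P < a * a := by linarith [hxx ▸ hx]
  have hQb : Q < b * b := by linarith [hyy ▸ hy]
  have hCS : S ^ 2 ≤ P * Q := by
    have h := Finset.sum_mul_sq_le_sq_mul_sq (Finset.univ : Finset (Fin n))
      (fun i => x i.succ) (fun i => y i.succ)
    simpa [pow_two, hPdef, hQdef, hSdef] using h
  set sp := Real.sqrt P with hsp
  set sq := Real.sqrt Q with hsq
  have hsp0 : 0 ≤ sp := Real.sqrt_nonneg _
  have hsq0 : 0 ≤ sq := Real.sqrt_nonneg _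
  have hsp2 : sp ^ 2 = P := Real.sq_sqrt hP0
  have hsq2 : sq ^ 2 = Q := Real.sq_sqrt hQ0
  have hST : S ≤ sp * sq := by
    calc S ≤ |S| := le_abs_self S
      _ = Real.sqrt (S^2) := (Real.sqrt_sq_eq_abs S).symm
      _ ≤ Real.sqrt (P*Q) := Real.sqrt_le_sqrt hCS
      _ = sp * sq := Real.sqrt_mul hP0 Q
  have hPQ : P * Q < (a*b)^2 := by nlinarith
  have hTab : sp * sq < a * b := by
    rw [hsp, hsq, ← Real.sqrt_mul hP0]
    calc Real.sqrt (P*Q) < Real.sqrt ((a*b)^2) :=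
          Real.sqrt_lt_sqrt (mul_nonneg hP0 hQ0) hPQ
      _ = a*b := Real.sqrt_sq (mul_pos hx0 hy0).le
  have hkey : (a*a - P) * (b*b - Q) ≤ (a*b - S)^2 := by
    nlinarith [sq_nonneg (a*sq - b*sp), mul_nonneg (sub_nonneg.2 hST) (sub_nonneg.2 hST),
      mul_pos (mul_pos hx0 hy0) (mul_pos hx0 hy0)]
  have hprodeq : lorentzInner x x * lorentzInner y y = (a*a - P) * (b*b - Q) := by
    rw [hxx, hyy]; ring
  have habS : 0 < a * b - S := by linarith
  have hsqrt : Real.sqrt (lorentzInner x x * lorentzInner y y) ≤ a * b - S := by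
    rw [hprodeq]
    calc Real.sqrt ((a*a - P) * (b*b - Q)) ≤ Real.sqrt ((a*b - S)^2) :=
          Real.sqrt_le_sqrt hkey
      _ = a*b - S := by rw [Real.sqrt_sq habS.le]
  have hpos : 0 < Real.sqrt (lorentzInner x x * lorentzInner y y) := by
    rw [hprodeq]
    exact Real.sqrt_pos.2 (mul_pos (by linarith) (by linarith))
  constructor
  · rw [hxy]; linarith
  · rw [hxy]; linarith
end

section
/- Let κ < 0, let v_1, …, v_N ∈ 𝕃^{n, κ}, and let α_1, …, α_N ≥ 0 with Σ_{j=1}^N α_j > 0. Then the weighted sum s = Σ_{j=1}^N α_j v_j is future-directed time-like: its time-like component s_0 is strictly positive and ⟨s, s⟩_L ≤ (Σ_{j=1}^N α_j)²/κ < 0. -/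
lemma li_symm {n : ℕ} (x y : Fin (n+1) → ℝ) : lorentzInner x y = lorentzInner y x := by
  unfold lorentzInner
  congr 1
  · ring
  · exact Finset.sum_congr rfl fun i _ => by ring

lemma li_smul_left {n : ℕ} (a : ℝ) (x y : Fin (n+1) → ℝ) :
    lorentzInner (a • x) y = a * lorentzInner x y := by
  unfold lorentzInner
  simp only [Pi.smul_apply, smul_eq_mul, mul_add, Finset.mul_sum, mul_neg]
  congr 1
  · ring
  · exact Finset.sum_congr rfl fun i _ => by ring

lemma li_sum_left {n N : ℕ} (f : Fin N → (Fin (n+1) → ℝ)) (y : Fin (n+1) → ℝ) :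
    lorentzInner (∑ j, f j) y = ∑ j, lorentzInner (f j) y := by
  unfold lorentzInner
  simp only [Finset.sum_apply, Finset.sum_mul]
  rw [Finset.sum_comm, ← Finset.sum_neg_distrib, ← Finset.sum_add_distrib]

lemma pair_le {n : ℕ} {κ : ℝ} (hκ : κ < 0) {x y : Fin (n+1) → ℝ}
    (hx : inLorentz κ x) (hy : inLorentz κ y) : lorentzInner x y ≤ 1 / κ := by
  obtain ⟨hx1, hx0⟩ := hx
  obtain ⟨hy1, hy0⟩ := hy
  unfold lorentzInner at *
  set A := ∑ i : Fin n, x i.succ * x i.succ with hA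
  set B := ∑ i : Fin n, y i.succ * y i.succ with hB
  set P := ∑ i : Fin n, x i.succ * y i.succ with hP
  have hA0 : 0 ≤ A := Finset.sum_nonneg fun i _ => mul_self_nonneg _
  have hB0 : 0 ≤ B := Finset.sum_nonneg fun i _ => mul_self_nonneg _
  have hCS : P^2 ≤ A * B := by
    have := Finset.sum_mul_sq_le_sq_mul_sq Finset.univ
      (fun i : Fin n => x i.succ) (fun i => y i.succ)
    simpa [hA, hB, hP, sq] using this
  have hc : 0 < -(1/κ) := by rw [neg_pos]; exact div_neg_of_pos_of_neg one_pos hκ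
  have hxe : (x 0)^2 = A + -(1/κ) := by nlinarith
  have hye : (y 0)^2 = B + -(1/κ) := by nlinarith
  set c := -(1/κ)
  have hAB : 2*P ≤ A + B := by
    rcases le_or_gt P 0 with h | h
    · linarith
    · nlinarith [sq_nonneg (A - B)]
  rcases le_or_gt (P + c) 0 with h | h
  · nlinarith [mul_pos hx0 hy0]
  · have h2 : (P + c)^2 ≤ (x 0 * y 0)^2 := by nlinarith
    nlinarith [mul_pos hx0 hy0]

/-- A nonnegative, nontrivially weighted sum of points of 𝕃^{n,κ}
is future-directed time-like. -/
theorem weighted_sum_timelike (n N : ℕ) (κ : ℝ) (hκ : κ < 0)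
    (v : Fin N → (Fin (n + 1) → ℝ)) (hv : ∀ j, inLorentz κ (v j))
    (α : Fin N → ℝ) (hα : ∀ j, 0 ≤ α j) (hsum : 0 < ∑ j, α j) :
    0 < (∑ j, α j • v j) 0 ∧
      lorentzInner (∑ j, α j • v j) (∑ j, α j • v j) ≤ (∑ j, α j) ^ 2 / κ ∧
        (∑ j, α j) ^ 2 / κ < 0 := by
  have hκinv : 1 / κ < 0 := div_neg_of_pos_of_neg one_pos hκ
  refine ⟨?_, ?_, ?_⟩
  · obtain ⟨j, hj⟩ : ∃ j, 0 < α j := by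
      by_contra h
      push_neg at h
      exact absurd hsum (not_lt.2 (Finset.sum_nonpos fun j _ => h j))
    rw [Finset.sum_apply]
    refine Finset.sum_pos' (fun k _ => ?_) ⟨j, Finset.mem_univ j, ?_⟩
    · exact mul_nonneg (hα k) (le_of_lt (hv k).2) |>.trans_eq (by simp)
    · simpa using mul_pos hj (hv j).2
  · have key : lorentzInner (∑ j, α j • v j) (∑ j, α j • v j)
        = ∑ j, α j * ∑ k, α k * lorentzInner (v j) (v k) := by
      rw [li_sum_left]
      refine Finset.sum_congr rfl fun j _ => ?_
      rw [li_smul_left, li_symm, li_sum_left]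
      congr 1
      exact Finset.sum_congr rfl fun k _ => by rw [li_smul_left, li_symm]
    rw [key]
    calc ∑ j, α j * ∑ k, α k * lorentzInner (v j) (v k)
        ≤ ∑ j, α j * ∑ k, α k * (1/κ) := by
          refine Finset.sum_le_sum fun j _ => mul_le_mul_of_nonneg_left ?_ (hα j)
          exact Finset.sum_le_sum fun k _ =>
            mul_le_mul_of_nonneg_left (pair_le hκ (hv j) (hv k)) (hα k)
      _ = (∑ j, α j) ^ 2 / κ := by
          rw [← Finset.sum_mul, ← Finset.sum_mul]
          field_simp
  · exact div_neg_of_pos_of_neg (by positivity) hκ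
end

section
/- Let κ < 0, let x, p ∈ 𝕃^{n, κ}, and let ε > 0. Set v = x + ε·p. Then the hyperbolic positional-encoding output x̃ = v / √(|κ · ⟨v, v⟩_L|) lies in 𝕃^{n, κ}; that is, ⟨x̃, x̃⟩_L = 1/κ and the time-like component of x̃ is strictly positive. -/
lemma lorentzInner_smul_smul {n : ℕ} (c : ℝ) (x : Fin (n + 1) → ℝ) :
    lorentzInner (c • x) (c • x) = c ^ 2 * lorentzInner x x := by
  simp only [lorentzInner, Pi.smul_apply, smul_eq_mul, mul_add, Finset.mul_sum, mul_neg]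
  congr 1
  · ring
  · apply Finset.sum_congr rfl; intro i _; ring

lemma lorentzInner_expand {n : ℕ} (ε : ℝ) (x p : Fin (n + 1) → ℝ) :
    lorentzInner (x + ε • p) (x + ε • p) =
      lorentzInner x x + 2 * ε * lorentzInner x p + ε ^ 2 * lorentzInner p p := by
  simp only [lorentzInner, Pi.add_apply, Pi.smul_apply, smul_eq_mul]
  have key : ∀ i : Fin n, (x i.succ + ε * p i.succ) * (x i.succ + ε * p i.succ)
      = x i.succ * x i.succ + 2 * ε * (x i.succ * p i.succ)
        + ε ^ 2 * (p i.succ * p i.succ) := fun i => by ring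
  rw [Finset.sum_congr rfl (fun i _ => key i), Finset.sum_add_distrib,
    Finset.sum_add_distrib, ← Finset.mul_sum, ← Finset.mul_sum]
  ring

lemma reverse_cauchy {n : ℕ} (κ : ℝ) (hκ : κ < 0)
    (x p : Fin (n + 1) → ℝ) (hx : inLorentz κ x) (hp : inLorentz κ p) :
    lorentzInner x p ≤ 1 / κ := by
  obtain ⟨hx1, hx0⟩ := hx
  obtain ⟨hp1, hp0⟩ := hp
  have h1κ : 1 / κ < 0 := div_neg_of_pos_of_neg one_pos hκ
  obtain ⟨a, ha⟩ : ∃ a : ℝ, a = -(1 / κ) := ⟨_, rfl⟩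
  have ha0 : 0 < a := by rw [ha]; linarith
  obtain ⟨X, hX⟩ : ∃ X : ℝ, X = ∑ i : Fin n, x i.succ ^ 2 := ⟨_, rfl⟩
  obtain ⟨P, hP⟩ : ∃ P : ℝ, P = ∑ i : Fin n, p i.succ ^ 2 := ⟨_, rfl⟩
  have hXnn : 0 ≤ X := hX ▸ Finset.sum_nonneg fun i _ => sq_nonneg _
  have hPnn : 0 ≤ P := hP ▸ Finset.sum_nonneg fun i _ => sq_nonneg _
  have hx02 : x 0 * x 0 = a + X := by
    have h := hx1; simp only [lorentzInner] at h
    have h2 : ∑ i : Fin n, x i.succ * x i.succ = X := by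
      rw [hX]; exact Finset.sum_congr rfl fun i _ => (sq (x i.succ)).symm
    rw [h2] at h; linarith [ha]
  have hp02 : p 0 * p 0 = a + P := by
    have h := hp1; simp only [lorentzInner] at h
    have h2 : ∑ i : Fin n, p i.succ * p i.succ = P := by
      rw [hP]; exact Finset.sum_congr rfl fun i _ => (sq (p i.succ)).symm
    rw [h2] at h; linarith [ha]
  have hcs : (∑ i : Fin n, x i.succ * p i.succ) ^ 2 ≤ X * P := by
    rw [hX, hP]
    exact Finset.sum_mul_sq_le_sq_mul_sq Finset.univ _ _
  have hsum : ∑ i : Fin n, x i.succ * p i.succ ≤ Real.sqrt (X * P) := by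
    calc ∑ i : Fin n, x i.succ * p i.succ
        ≤ |∑ i : Fin n, x i.succ * p i.succ| := le_abs_self _
      _ = Real.sqrt ((∑ i : Fin n, x i.succ * p i.succ) ^ 2) := (Real.sqrt_sq_eq_abs _).symm
      _ ≤ Real.sqrt (X * P) := Real.sqrt_le_sqrt hcs
  have hx0p0 : a + Real.sqrt (X * P) ≤ x 0 * p 0 := by
    have h1 : x 0 * p 0 = Real.sqrt ((a + X) * (a + P)) := by
      rw [← hx02, ← hp02,
        show x 0 * x 0 * (p 0 * p 0) = (x 0 * p 0) * (x 0 * p 0) by ring,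
        Real.sqrt_mul_self (by positivity)]
    rw [h1]
    have hsqXP : Real.sqrt (X * P) ^ 2 = X * P := Real.sq_sqrt (by positivity)
    have h3 : 2 * Real.sqrt (X * P) ≤ X + P := by
      nlinarith [sq_nonneg (Real.sqrt X - Real.sqrt P), Real.sq_sqrt hXnn,
        Real.sq_sqrt hPnn, Real.sqrt_mul hXnn P, Real.sqrt_nonneg X, Real.sqrt_nonneg P]
    have h2 : (a + Real.sqrt (X * P)) ^ 2 ≤ (a + X) * (a + P) := by nlinarith
    calc a + Real.sqrt (X * P)
        = Real.sqrt ((a + Real.sqrt (X * P)) ^ 2) := by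
          rw [Real.sqrt_sq (by positivity)]
      _ ≤ Real.sqrt ((a + X) * (a + P)) := Real.sqrt_le_sqrt h2
  simp only [lorentzInner]
  have hs : 0 ≤ Real.sqrt (X * P) := Real.sqrt_nonneg _
  have hsum2 : ∑ i : Fin n, x i.succ * p i.succ ≤ Real.sqrt (X * P) := hsum
  linarith [ha]

/-- The hyperbolic positional-encoding output lies in 𝕃^{n,κ}. -/
theorem positional_encoding_mem (n : ℕ) (κ : ℝ) (hκ : κ < 0)
    (x p : Fin (n + 1) → ℝ) (hx : inLorentz κ x) (hp : inLorentz κ p)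
    (ε : ℝ) (hε : 0 < ε) (v : Fin (n + 1) → ℝ) (hv : v = x + ε • p) :
    inLorentz κ ((1 / Real.sqrt |κ * lorentzInner v v|) • v) := by
  have hxp := reverse_cauchy κ hκ x p hx hp
  have hvv : lorentzInner v v =
      1 / κ + 2 * ε * lorentzInner x p + ε ^ 2 * (1 / κ) := by
    rw [hv, lorentzInner_expand, hx.1, hp.1]
  have h1κ : 1 / κ < 0 := div_neg_of_pos_of_neg one_pos hκ
  have hvneg : lorentzInner v v < 0 := by nlinarith
  have hpos : 0 < κ * lorentzInner v v := mul_pos_of_neg_of_neg hκ hvneg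
  have habs : |κ * lorentzInner v v| = κ * lorentzInner v v := abs_of_pos hpos
  rw [habs]
  have hsqrt : 0 < Real.sqrt (κ * lorentzInner v v) := Real.sqrt_pos.mpr hpos
  constructor
  · rw [lorentzInner_smul_smul, div_pow, one_pow, Real.sq_sqrt hpos.le]
    rw [div_mul_eq_mul_div, one_mul, div_eq_div_iff (by positivity) (ne_of_lt hκ)]
    ring
  · have hv0 : 0 < v 0 := by
      rw [hv]; simp only [Pi.add_apply, Pi.smul_apply, smul_eq_mul]
      have := mul_pos hε hp.2
      linarith [hx.2]
    simp only [Pi.smul_apply, smul_eq_mul]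
    exact mul_pos (by positivity) hv0
end
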